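/- For the planar system Σ' = -Σ(1 - 2A - C₂(Σ² - A²)), A' = A(1 + 2Σ + C₂(Σ² - A²)) with parameter C₂ > 0, the point (Σ,A) = (0, 1/√C₂) is an equilibrium whose Jacobian has eigenvalues 2/√C₂ - 2 and -2; hence it is a hyperbolic saddle when 0 < C₂ < 1, non-hyperbolic when C₂ = 1, and a hyperbolic sink when C₂ > 1. -/

import Mathlib

noncomputable section

/-- Extreme-tilt (v = -1) planar vector field:
`Σ' = -Σ(1 - 2A - C₂(Σ² - A²))`, `A' = A(1 + 2Σ + C₂(Σ² - A²))`. -/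
def Fminus (C₂ : ℝ) : ℝ × ℝ → ℝ × ℝ := fun p =>
  (-p.1 * (1 - 2 * p.2 - C₂ * (p.1 ^ 2 - p.2 ^ 2)),
    p.2 * (1 + 2 * p.1 + C₂ * (p.1 ^ 2 - p.2 ^ 2)))

/-- The point `(Σ, A) = (0, 1/√C₂)` is an equilibrium of the v = -1 extreme-tilt
system whose Jacobian has the eigenvalues `2/√C₂ - 2` and `-2`; hence it is a
hyperbolic saddle for `0 < C₂ < 1`, non-hyperbolic for `C₂ = 1`, and a hyperbolic
sink for `C₂ > 1`. -/
theorem P6_stability (C₂ : ℝ) (hC : 0 < C₂) :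
    Fminus C₂ (0, 1 / Real.sqrt C₂) = 0 ∧
    Module.End.HasEigenvalue
      ((fderiv ℝ (Fminus C₂) (0, 1 / Real.sqrt C₂)).toLinearMap)
      (2 / Real.sqrt C₂ - 2) ∧
    Module.End.HasEigenvalue
      ((fderiv ℝ (Fminus C₂) (0, 1 / Real.sqrt C₂)).toLinearMap) (-2) ∧
    (C₂ < 1 → 0 < 2 / Real.sqrt C₂ - 2) ∧
    (C₂ = 1 → 2 / Real.sqrt C₂ - 2 = 0) ∧
    (1 < C₂ → 2 / Real.sqrt C₂ - 2 < 0) := by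
  have hs : 0 < Real.sqrt C₂ := Real.sqrt_pos.2 hC
  set a : ℝ := 1 / Real.sqrt C₂ with ha
  have hsq : Real.sqrt C₂ * Real.sqrt C₂ = C₂ := Real.mul_self_sqrt hC.le
  have haa : C₂ * a ^ 2 = 1 := by
    rw [ha]
    field_simp
    rw [Real.sq_sqrt hC.le]
  set p₀ : ℝ × ℝ := (0, a) with hp₀
  have hx : HasFDerivAt (fun p : ℝ × ℝ => p.1) (ContinuousLinearMap.fst ℝ ℝ ℝ) p₀ :=
    hasFDerivAt_fst
  have hy : HasFDerivAt (fun p : ℝ × ℝ => p.2) (ContinuousLinearMap.snd ℝ ℝ ℝ) p₀ :=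
    hasFDerivAt_snd
  have hx2 : HasFDerivAt (fun p : ℝ × ℝ => p.1 ^ 2)
      (p₀.1 • ContinuousLinearMap.fst ℝ ℝ ℝ + p₀.1 • ContinuousLinearMap.fst ℝ ℝ ℝ) p₀ := by
    simpa [pow_two, Pi.mul_def] using hx.mul hx
  have hy2 : HasFDerivAt (fun p : ℝ × ℝ => p.2 ^ 2)
      (p₀.2 • ContinuousLinearMap.snd ℝ ℝ ℝ + p₀.2 • ContinuousLinearMap.snd ℝ ℝ ℝ) p₀ := by
    simpa [pow_two, Pi.mul_def] using hy.mul hy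
  have hq : HasFDerivAt (fun p : ℝ × ℝ => C₂ * (p.1 ^ 2 - p.2 ^ 2)) _ p₀ :=
    (hx2.sub hy2).const_mul C₂
  have hf₁ : HasFDerivAt (fun p : ℝ × ℝ => -p.1 * (1 - 2 * p.2 - C₂ * (p.1 ^ 2 - p.2 ^ 2)))
      _ p₀ :=
    hx.neg.mul (((hasFDerivAt_const (1:ℝ) p₀).sub (hy.const_mul 2)).sub hq)
  have hf₂ : HasFDerivAt (fun p : ℝ × ℝ => p.2 * (1 + 2 * p.1 + C₂ * (p.1 ^ 2 - p.2 ^ 2)))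
      _ p₀ :=
    hy.mul (((hasFDerivAt_const (1:ℝ) p₀).add (hx.const_mul 2)).add hq)
  have hF : HasFDerivAt (Fminus C₂) _ p₀ := HasFDerivAt.prodMk hf₁ hf₂
  have hD := hF.fderiv
  have key : ∀ v : ℝ × ℝ, (fderiv ℝ (Fminus C₂) p₀) v =
      ((2 * a - 2) * v.1, 2 * a * v.1 - 2 * v.2) := by
    intro v
    rw [hD]
    simp only [hp₀, ContinuousLinearMap.prod_apply, ContinuousLinearMap.smul_apply,
      ContinuousLinearMap.add_apply, ContinuousLinearMap.sub_apply,
      ContinuousLinearMap.neg_apply, ContinuousLinearMap.zero_apply, Pi.neg_apply,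
      ContinuousLinearMap.coe_fst', ContinuousLinearMap.coe_snd', smul_eq_mul,
      Prod.mk.injEq]
    constructor
    · linear_combination (-v.1) * haa
    · linear_combination (-3 * v.2) * haa
  refine ⟨?_, ?_, ?_, ?_, ?_, ?_⟩
  · have h0 : C₂ * ((0:ℝ) ^ 2 - a ^ 2) = -1 := by linear_combination -haa
    simp only [Fminus, hp₀, h0]
    norm_num
  · apply Module.End.hasEigenvalue_of_hasEigenvector (x := ((1:ℝ), 1))
    refine ⟨Module.End.mem_eigenspace_iff.2 ?_, by simp⟩
    simp only [ContinuousLinearMap.coe_coe]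
    rw [key (1, 1)]
    have h2 : 2 / Real.sqrt C₂ = 2 * a := by rw [ha]; ring
    rw [h2]
    simp [Prod.smul_def, smul_eq_mul]
  · apply Module.End.hasEigenvalue_of_hasEigenvector (x := ((0:ℝ), 1))
    refine ⟨Module.End.mem_eigenspace_iff.2 ?_, by simp⟩
    simp only [ContinuousLinearMap.coe_coe]
    rw [key (0, 1)]
    simp [Prod.smul_def, smul_eq_mul]
  · intro h
    have h1 : Real.sqrt C₂ < 1 := by nlinarith [hsq]
    have h2 : 1 < 1 / Real.sqrt C₂ := (one_lt_div hs).2 h1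
    have h3 : 2 / Real.sqrt C₂ = 2 * (1 / Real.sqrt C₂) := by ring
    linarith
  · intro h; subst h; simp
  · intro h
    have h1 : 1 < Real.sqrt C₂ := by nlinarith [hsq, hs]
    have h2 : 1 / Real.sqrt C₂ < 1 := (div_lt_one hs).2 h1
    have h3 : 2 / Real.sqrt C₂ = 2 * (1 / Real.sqrt C₂) := by ring
    linarith
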